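/- Assume s_0 ≥ 1, and for 0 ≤ j ≤ t−1 let d_j be the minimum distance of C_j. Then the EII code C is nonzero and its minimum distance equals min{ d_j·(ŝ_{j+1}+1) : 0 ≤ j ≤ t−1 }. -/

import Mathlib

open Finset Matrix

lemma vand_key {F : Type*} [Field F] {V : Type*} [AddCommGroup V] [Module F V]
    (W : Submodule F V) {m : ℕ} {α : F} (hα : m ≤ orderOf α)
    (g : Fin m → V) (S : Finset (Fin m)) (hsupp : ∀ j, j ∉ S → g j = 0)
    {e : ℕ} (hcard : S.card ≤ e)
    (hsum : ∀ r, r < e → (∑ j : Fin m, α ^ (r * (j : ℕ)) • g j) ∈ W) :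
    ∀ j, g j ∈ W := by
  classical
  set k := S.card with hk
  set σ : Fin k ≃ S := S.equivFin.symm with hσ
  set y : Fin k → F := fun a => α ^ (((σ a : Fin m)) : ℕ) with hy
  have hyinj : Function.Injective y := by
    intro a b hab
    have h1 : ((σ a : Fin m) : ℕ) = ((σ b : Fin m) : ℕ) :=
      pow_injOn_Iio_orderOf (lt_of_lt_of_le (σ a : Fin m).isLt hα)
        (lt_of_lt_of_le (σ b : Fin m).isLt hα) hab
    exact σ.injective (Subtype.ext (Fin.ext h1))
  set M : Matrix (Fin k) (Fin k) F := (Matrix.vandermonde y)ᵀ with hM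
  have hdet : IsUnit M.det := by
    rw [Matrix.det_transpose]
    exact isUnit_iff_ne_zero.mpr (Matrix.det_vandermonde_ne_zero_iff.mpr hyinj)
  have hNM : M⁻¹ * M = 1 := Matrix.nonsing_inv_mul M hdet
  have hsyn : ∀ r : Fin k, (∑ j : Fin m, α ^ ((r : ℕ) * (j : ℕ)) • g j)
      = ∑ a : Fin k, M r a • g (σ a) := by
    intro r
    have h0 : (∑ j : Fin m, α ^ ((r : ℕ) * (j : ℕ)) • g j)
        = ∑ j ∈ S, α ^ ((r : ℕ) * (j : ℕ)) • g j := by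
      rw [← Finset.sum_subset (Finset.subset_univ S)]
      intro j _ hj
      rw [hsupp j hj, smul_zero]
    rw [h0, ← Finset.sum_coe_sort S (fun j => α ^ ((r : ℕ) * (j : ℕ)) • g j),
      ← Equiv.sum_comp σ (fun x : S => α ^ ((r : ℕ) * ((x : Fin m) : ℕ)) • g x)]
    refine Finset.sum_congr rfl fun a _ => ?_
    have : α ^ ((r : ℕ) * ((σ a : Fin m) : ℕ)) = M r a := by
      rw [hM, Matrix.transpose_apply, Matrix.vandermonde_apply, hy, pow_mul']
    rw [this]
  have hmem : ∀ a : Fin k, g (σ a) ∈ W := by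
    intro a
    have key : g (σ a) = ∑ r : Fin k, M⁻¹ a r • (∑ b : Fin k, M r b • g (σ b)) := by
      have : ∑ r : Fin k, M⁻¹ a r • (∑ b : Fin k, M r b • g (σ b))
          = ∑ b : Fin k, ((M⁻¹ * M) a b) • g (σ b) := by
        simp_rw [Finset.smul_sum, smul_smul]
        rw [Finset.sum_comm]
        refine Finset.sum_congr rfl fun b _ => ?_
        rw [← Finset.sum_smul, Matrix.mul_apply]
      rw [this, hNM]
      simp [Matrix.one_apply]
    rw [key]
    refine Submodule.sum_mem W fun r _ => Submodule.smul_mem W _ ?_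
    rw [← hsyn r]
    exact hsum (r : ℕ) (lt_of_lt_of_le r.isLt hcard)
  intro j
  by_cases hj : j ∈ S
  · have := hmem (σ.symm ⟨j, hj⟩)
    simpa using this
  · rw [hsupp j hj]; exact W.zero_mem

lemma norm_blocks {F : Type*} [DecidableEq F] [Zero F] {m n : ℕ} (c : Fin m → Fin n → F) :
    hammingNorm (fun p : Fin m × Fin n => c p.1 p.2) = ∑ j, hammingNorm (c j) := by
  simp only [hammingNorm, Finset.card_filter]
  rw [Fintype.sum_prod_type]

lemma norm_smul' {F : Type*} [Field F] [DecidableEq F] {n : ℕ} {γ : F} (hγ : γ ≠ 0)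
    (x : Fin n → F) : hammingNorm (γ • x) = hammingNorm x := by
  simp only [hammingNorm]
  congr 1
  apply Finset.filter_congr
  intro i _
  simp [Pi.smul_apply, smul_eq_mul, hγ]


/-- minimum distance of an EII code, Theorem `lemma1` of the paper.

Same EII context, with `s 0 ≥ 1`, and `d j` the minimum distance of `C j` for
`0 ≤ j ≤ t-1` (least Hamming weight of a nonzero codeword).  A codeword of the EII
code is viewed as a vector of length `m·n`, its Hamming weight counting all nonzero
entries.  Claim: the EII code is nonzero and its minimum distance equals
`min { d j · (ŝ (j+1) + 1) : 0 ≤ j ≤ t-1 }` (expressed below via `IsLeast`, which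
also asserts the existence of a nonzero codeword of that weight). -/
theorem stmt_4
    {F : Type*} [Field F] [Fintype F] [DecidableEq F]
    (n t : ℕ) (hn : 1 ≤ n) (ht : 1 ≤ t)
    (C : ℕ → Submodule F (Fin n → F))
    (hCt : C t = ⊥)
    (hnest : ∀ i, i < t → C (i + 1) < C i)
    (s : ℕ → ℕ) (m : ℕ)
    (hm : m = ∑ i ∈ Finset.range (t + 1), s i) (hm1 : 1 ≤ m)
    (α : F) (hα : m ≤ orderOf α)
    (shat : ℕ → ℕ) (hshat : ∀ i, shat i = ∑ j ∈ Finset.Icc i t, s j)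
    (hs0 : 1 ≤ s 0)
    (d : ℕ → ℕ)
    (hd : ∀ j, j < t →
      IsLeast {w : ℕ | ∃ x ∈ C j, x ≠ 0 ∧ hammingNorm x = w} (d j)) :
    IsLeast {w : ℕ | ∃ c : Fin m → Fin n → F,
        ((∀ j, c j ∈ C 0) ∧ ∀ i, 1 ≤ i → i ≤ t → ∀ r, r < shat i →
            (∑ j : Fin m, α ^ (r * (j : ℕ)) • c j) ∈ C i) ∧
        c ≠ 0 ∧ hammingNorm (fun p : Fin m × Fin n => c p.1 p.2) = w}
      ((Finset.range t).inf'
        (Finset.nonempty_range_iff.mpr (Nat.one_le_iff_ne_zero.mp ht))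
        (fun j => d j * (shat (j + 1) + 1))) := by
  classical
  -- basic facts about shat
  have hIcc0 : Finset.Icc 0 t = Finset.range (t + 1) := by
    ext x; simp [Nat.lt_succ_iff]
  have hshat0 : shat 0 = m := by rw [hshat, hIcc0, hm]
  have hanti : ∀ i i', i ≤ i' → shat i' ≤ shat i := by
    intro i i' h
    rw [hshat, hshat]
    exact Finset.sum_le_sum_of_subset (Finset.Icc_subset_Icc_left h)
  have hsplit : shat 0 = s 0 + shat 1 := by
    have h01 : Finset.Icc 0 t = insert 0 (Finset.Icc 1 t) := by
      ext x; simp; omega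
    rw [hshat 0, h01, Finset.sum_insert (by simp), ← hshat 1]
  have hshat1 : shat 1 + 1 ≤ m := by omega
  -- antitonicity of the codes
  have hCle : ∀ i', i' ≤ t → ∀ i, i ≤ i' → C i' ≤ C i := by
    intro i' hi'
    induction i' with
    | zero => intro i hi; rw [Nat.le_zero.mp hi]
    | succ k ih =>
      intro i hi
      rcases Nat.lt_or_ge i (k + 1) with h | h
      · exact le_trans (le_of_lt (hnest k (by omega))) (ih (by omega) i (by omega))
      · have : i = k + 1 := by omega
        rw [this]
  constructor
  · -- membership : construct a codeword of the required weight
    obtain ⟨j0, hj0mem, hinf⟩ := Finset.exists_mem_eq_inf'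
      (Finset.nonempty_range_iff.mpr (Nat.one_le_iff_ne_zero.mp ht))
      (fun j => d j * (shat (j + 1) + 1))
    have hj0t : j0 < t := Finset.mem_range.mp hj0mem
    obtain ⟨x, hx, hxne, hxnorm⟩ := (hd j0 hj0t).1
    set e0 := shat (j0 + 1) with he0
    set u := e0 + 1 with hu
    have hum : u ≤ m := by
      have := hanti 1 (j0 + 1) (by omega)
      omega
    -- a nonzero dependence relation among the u power vectors
    have hnli : ¬ LinearIndependent F
        (fun a : Fin u => (fun r : Fin e0 => α ^ ((r : ℕ) * (a : ℕ)))) := by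
      intro h
      have := h.fintype_card_le_finrank
      simp [Module.finrank_fintype_fun_eq_card] at this
      omega
    obtain ⟨β, hβsum, a0, ha0⟩ := Fintype.not_linearIndependent_iff.mp hnli
    have hsum0 : ∀ r, r < e0 → ∑ a : Fin u, α ^ (r * (a : ℕ)) * β a = 0 := by
      intro r hr
      have := congr_fun hβsum ⟨r, hr⟩
      simpa [Finset.sum_apply, mul_comm] using this
    -- all entries of β are nonzero
    have hβall : ∀ a, β a ≠ 0 := by
      intro a ha
      have hkey := vand_key (⊥ : Submodule F F) (le_trans hum hα) β
        (Finset.univ.erase a)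
        (by intro b hb
            have : b = a := by simpa using hb
            rw [this]; exact ha)
        (e := e0)
        (by rw [Finset.card_erase_of_mem (Finset.mem_univ a)]
            simp [hu])
        (by intro r hr
            have := hsum0 r hr
            simp only [Submodule.mem_bot, smul_eq_mul]
            exact this)
      have := hkey a0
      rw [Submodule.mem_bot] at this
      exact ha0 this
    -- define the codeword
    set δ : ℕ → F := fun j => if h : j < u then β ⟨j, h⟩ else 0 with hδ
    set c : Fin m → Fin n → F := fun j => δ (j : ℕ) • x with hc
    have hδβ : ∀ a : Fin u, δ (a : ℕ) = β a := by
      intro a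
      simp only [hδ, dif_pos a.isLt]
    have hcoefsum : ∀ r, ∑ j : Fin m, α ^ (r * (j : ℕ)) * δ (j : ℕ)
        = ∑ a : Fin u, α ^ (r * (a : ℕ)) * β a := by
      intro r
      rw [Fin.sum_univ_eq_sum_range (fun j => α ^ (r * j) * δ j) m,
        ← Finset.sum_subset (Finset.range_mono hum)
          (by intro j _ hj
              have : ¬ j < u := by simpa using hj
              simp [hδ, this]),
        ← Fin.sum_univ_eq_sum_range (fun j => α ^ (r * j) * δ j) u]
      exact Finset.sum_congr rfl fun a _ => by rw [hδβ a]
    refine ⟨c, ⟨?_, ?_⟩, ?_, ?_⟩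
    · intro j
      exact Submodule.smul_mem _ _ (hCle j0 (le_of_lt hj0t) 0 (Nat.zero_le _) hx)
    · intro i hi1 hit r hr
      have hterm : ∀ j : Fin m, α ^ (r * (j : ℕ)) • c j
          = (α ^ (r * (j : ℕ)) * δ (j : ℕ)) • x := by
        intro j; rw [hc]; simp [smul_smul]
      rcases le_or_gt i j0 with hij | hij
      · refine Submodule.sum_mem _ fun j _ => ?_
        rw [hterm j]
        exact Submodule.smul_mem _ _ (hCle j0 (le_of_lt hj0t) i hij hx)
      · have hre : r < e0 := lt_of_lt_of_le hr (hanti (j0 + 1) i hij)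
        have : (∑ j : Fin m, α ^ (r * (j : ℕ)) • c j)
            = (∑ j : Fin m, α ^ (r * (j : ℕ)) * δ (j : ℕ)) • x := by
          rw [Finset.sum_smul]
          exact Finset.sum_congr rfl fun j _ => hterm j
        rw [this, hcoefsum r, hsum0 r hre, zero_smul]
        exact Submodule.zero_mem _
    · intro h
      have h0u : (0 : ℕ) < u := by omega
      have h0m : (0 : ℕ) < m := by omega
      have := congr_fun h ⟨0, h0m⟩
      rw [hc] at this
      simp only [Pi.zero_apply] at this
      have hδ0 : δ ((⟨0, h0m⟩ : Fin m) : ℕ) = β ⟨0, h0u⟩ := by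
        simp [hδ, h0u]
      rw [hδ0] at this
      exact hxne (by
        have := smul_eq_zero.mp this
        rcases this with h' | h'
        · exact absurd h' (hβall _)
        · exact h')
    · rw [norm_blocks]
      have hnormblk : ∀ j : Fin m, hammingNorm (c j)
          = if (j : ℕ) < u then d j0 else 0 := by
        intro j
        rw [hc]
        by_cases hju : (j : ℕ) < u
        · rw [if_pos hju]
          have : δ (j : ℕ) = β ⟨(j : ℕ), hju⟩ := by simp [hδ, hju]
          simp only [this]
          rw [norm_smul' (hβall _), hxnorm]
        · rw [if_neg hju]
          have : δ (j : ℕ) = 0 := by simp [hδ, hju]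
          simp [this]
      calc ∑ j : Fin m, hammingNorm (c j)
          = ∑ j : Fin m, (if (j : ℕ) < u then d j0 else 0) :=
            Finset.sum_congr rfl fun j _ => hnormblk j
        _ = ∑ j ∈ Finset.range m, (if j < u then d j0 else 0) :=
            Fin.sum_univ_eq_sum_range (fun j => if j < u then d j0 else 0) m
        _ = ∑ j ∈ Finset.range u, (if j < u then d j0 else 0) :=
            (Finset.sum_subset (Finset.range_mono hum)
              (by intro j _ hj
                  have : ¬ j < u := by simpa using hj
                  simp [this])).symm
        _ = ∑ j ∈ Finset.range u, d j0 :=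
            Finset.sum_congr rfl fun j hj => if_pos (Finset.mem_range.mp hj)
        _ = u * d j0 := by rw [Finset.sum_const, Finset.card_range, smul_eq_mul]
        _ = (Finset.range t).inf'
              (Finset.nonempty_range_iff.mpr (Nat.one_le_iff_ne_zero.mp ht))
              (fun j => d j * (shat (j + 1) + 1)) := by
            rw [hinf]; ring
  · -- lower bound
    rintro w ⟨c, ⟨hc0, hconstr⟩, hcne, hw⟩
    set S : Finset (Fin m) := Finset.univ.filter (fun j => c j ≠ 0) with hS
    set u := S.card with huset
    have hsuppc : ∀ j, j ∉ S → c j = 0 := by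
      intro j hj
      by_contra h
      exact hj (by simp [hS, h])
    have hut : shat t < u := by
      by_contra h
      push_neg at h
      have hkey := vand_key (⊥ : Submodule F (Fin n → F)) hα c S hsuppc h
        (by intro r hr
            have := hconstr t ht le_rfl r hr
            rwa [hCt] at this)
      exact hcne (funext fun j => by simpa using hkey j)
    have hum : u ≤ m := by
      have := Finset.card_le_univ S
      simpa using this
    set T := (Finset.Icc 0 t).filter (fun i => u ≤ shat i) with hT
    have hT0 : 0 ∈ T := by
      simp only [hT, Finset.mem_filter, Finset.mem_Icc]
      exact ⟨⟨Nat.zero_le _, Nat.zero_le _⟩, by rw [hshat0]; exact hum⟩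
    have hTne : T.Nonempty := ⟨0, hT0⟩
    set i0 := T.max' hTne with hi0
    have hi0mem := T.max'_mem hTne
    simp only [hT, Finset.mem_filter, Finset.mem_Icc] at hi0mem
    have hi0t : i0 ≤ t := hi0mem.1.2
    have hi0u : u ≤ shat i0 := hi0mem.2
    have hi0lt : i0 < t := by
      rcases Nat.lt_or_ge i0 t with h | h
      · exact h
      · exfalso
        have : i0 = t := le_antisymm hi0t h
        rw [this] at hi0u
        omega
    have hnotin : i0 + 1 ∉ T := by
      intro h
      have := Finset.le_max' T _ h
      omega
    have hu1 : shat (i0 + 1) + 1 ≤ u := by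
      by_contra h
      push_neg at h
      exact hnotin (by
        simp only [hT, Finset.mem_filter, Finset.mem_Icc]
        exact ⟨⟨Nat.zero_le _, by omega⟩, by omega⟩)
    have hblocks : ∀ j, c j ∈ C i0 := by
      rcases Nat.eq_zero_or_pos i0 with h0 | h0
      · rw [h0]; exact hc0
      · exact vand_key (C i0) hα c S hsuppc hi0u
          (fun r hr => hconstr i0 h0 hi0t r hr)
    have hwsum : w = ∑ j, hammingNorm (c j) := by rw [← hw, norm_blocks]
    have hlow : ∀ j ∈ S, d i0 ≤ hammingNorm (c j) := by
      intro j hj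
      have hjne : c j ≠ 0 := by
        simp only [hS, Finset.mem_filter] at hj
        exact hj.2
      exact (hd i0 hi0lt).2 ⟨c j, hblocks j, hjne, rfl⟩
    calc (Finset.range t).inf'
          (Finset.nonempty_range_iff.mpr (Nat.one_le_iff_ne_zero.mp ht))
          (fun j => d j * (shat (j + 1) + 1))
        ≤ d i0 * (shat (i0 + 1) + 1) :=
          Finset.inf'_le _ (Finset.mem_range.mpr hi0lt)
      _ ≤ d i0 * u := Nat.mul_le_mul_left _ hu1
      _ = ∑ _j ∈ S, d i0 := by rw [Finset.sum_const, smul_eq_mul, mul_comm]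
      _ ≤ ∑ j ∈ S, hammingNorm (c j) := Finset.sum_le_sum hlow
      _ ≤ ∑ j, hammingNorm (c j) :=
          Finset.sum_le_sum_of_subset (Finset.subset_univ S)
      _ = w := hwsum.symm
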